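/- Let p : ℝᴺ → ℝ be C¹ with ∇p(x₀) ≠ 0, and θ ∈ (0, π/2). Then for every sufficiently small ε > 0, the maximum of p over the closed ball {x : |x - x₀| ≤ ε} equals the maximum of p over the spherical cap {x : |x - x₀| = ε, (x - x₀)·∇p(x₀) ≥ ε|∇p(x₀)| cos θ}. -/

import Mathlib

set_option maxHeartbeats 1000000

open Real
open scoped InnerProductSpace

theorem stmt_5 (N : ℕ) (p : EuclideanSpace ℝ (Fin N) → ℝ)
    (x₀ : EuclideanSpace ℝ (Fin N))
    (hp : ContDiff ℝ 1 p) (hgrad : gradient p x₀ ≠ 0)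
    (θ : ℝ) (hθ : θ ∈ Set.Ioo 0 (π / 2)) :
    ∃ ε₀ : ℝ, 0 < ε₀ ∧
      ∀ ε : ℝ, 0 < ε → ε ≤ ε₀ →
        sSup (p '' {x | ‖x - x₀‖ ≤ ε})
          = sSup (p '' {x | ‖x - x₀‖ = ε ∧
              Real.cos θ * (ε * ‖gradient p x₀‖) ≤ ⟪x - x₀, gradient p x₀⟫_ℝ}) := by
  classical
  obtain ⟨hθ0, hθ2⟩ := hθ
  set g := gradient p x₀ with hg
  have hG : 0 < ‖g‖ := norm_pos_iff.mpr hgrad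
  have hinner : ∀ v, fderiv ℝ p x₀ v = ⟪g, v⟫_ℝ := fun v =>
    (InnerProductSpace.toDual_symm_apply).symm
  have hgg : ⟪g, g⟫_ℝ = ‖g‖ * ‖g‖ := real_inner_self_eq_norm_mul_norm g
  have hc0 : 0 < Real.cos θ :=
    Real.cos_pos_of_mem_Ioo ⟨by linarith [Real.pi_pos], hθ2⟩
  have hc1 : Real.cos θ < 1 := by
    have := Real.cos_lt_cos_of_nonneg_of_le_pi (le_refl 0) (by linarith [Real.pi_pos]) hθ0
    simpa using this
  set κ := (1 - Real.cos θ) * ‖g‖ / 2 with hκdef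
  have hκ0 : 0 < κ := by
    have : 0 < 1 - Real.cos θ := by linarith
    positivity
  have hκG : κ < ‖g‖ := by nlinarith
  have hdiff : Differentiable ℝ p := hp.differentiable one_ne_zero
  have hpc : Continuous p := hp.continuous
  have hfc : Continuous (fderiv ℝ p) := hp.continuous_fderiv one_ne_zero
  obtain ⟨δ, hδ0, hδ⟩ : ∃ δ > 0, ∀ {y}, dist y x₀ < δ →
      dist (fderiv ℝ p y) (fderiv ℝ p x₀) < κ :=
    Metric.continuousAt_iff.mp hfc.continuousAt κ hκ0
  refine ⟨δ / 2, by positivity, ?_⟩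
  intro ε hε hεδ
  have hbound : ∀ y : EuclideanSpace ℝ (Fin N), ‖y - x₀‖ ≤ ε →
      ‖fderiv ℝ p y - fderiv ℝ p x₀‖ ≤ κ := by
    intro y hy
    have h1 : dist y x₀ < δ := by
      rw [dist_eq_norm]; linarith
    have := hδ h1
    rw [dist_eq_norm] at this
    exact this.le
  set K : Set (EuclideanSpace ℝ (Fin N)) := Metric.closedBall x₀ ε with hK
  have hball : {x : EuclideanSpace ℝ (Fin N) | ‖x - x₀‖ ≤ ε} = K := by
    ext x; simp [hK, Metric.mem_closedBall, dist_eq_norm]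
  have hx₀K : x₀ ∈ K := Metric.mem_closedBall_self hε.le
  -- Taylor estimate on the ball
  have taylor : ∀ y ∈ K, |p y - p x₀ - ⟪y - x₀, g⟫_ℝ| ≤ κ * ‖y - x₀‖ := by
    intro y hy
    have hb : ∀ z ∈ K, ‖fderiv ℝ p z - fderiv ℝ p x₀‖ ≤ κ := by
      intro z hz
      exact hbound z (by simpa [hK, dist_eq_norm] using hz)
    have := Convex.norm_image_sub_le_of_norm_hasFDerivWithin_le'
      (f := p) (f' := fderiv ℝ p) (φ := fderiv ℝ p x₀) (C := κ) (s := K)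
      (fun z _ => (hdiff z).hasFDerivAt.hasFDerivWithinAt) hb
      (convex_closedBall _ _) hx₀K hy
    rw [hinner (y - x₀), real_inner_comm] at this
    simpa [Real.norm_eq_abs] using this
  -- maximum point on the ball
  obtain ⟨xm, hxmK, hxm⟩ := (isCompact_closedBall x₀ ε).exists_isMaxOn
    ⟨x₀, hx₀K⟩ hpc.continuousOn
  have hxm_norm : ‖xm - x₀‖ ≤ ε := by simpa [hK, dist_eq_norm] using hxmK
  -- push the maximum to the sphere along g
  set n : ℝ → ℝ := fun t => ‖xm + t • g - x₀‖ with hn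
  have hn_cont : Continuous n := by
    apply Continuous.norm; continuity
  have hn0 : n 0 ≤ ε := by simpa [hn] using hxm_norm
  have hnbig : ε ≤ n (2 * ε / ‖g‖) := by
    have h1 : ‖(2 * ε / ‖g‖) • g‖ = 2 * ε := by
      rw [norm_smul, Real.norm_eq_abs, abs_of_pos (by positivity)]
      field_simp
    have h2 : xm + (2 * ε / ‖g‖) • g - x₀ = (xm - x₀) + (2 * ε / ‖g‖) • g := by abel
    have h3 := norm_sub_norm_le ((2 * ε / ‖g‖) • g) (-(xm - x₀))
    simp only [norm_neg] at h3
    have h4 : (2 * ε / ‖g‖) • g - -(xm - x₀) = xm + (2 * ε / ‖g‖) • g - x₀ := by abel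
    rw [h4, h1] at h3
    simp only [hn]
    linarith
  set S : Set ℝ := {t | 0 ≤ t ∧ n t = ε} with hS
  have hS_ne : S.Nonempty := by
    have h2ε : (0:ℝ) ≤ 2 * ε / ‖g‖ := by positivity
    have := intermediate_value_Icc h2ε hn_cont.continuousOn
    obtain ⟨T, hT, hTeq⟩ := this ⟨hn0, hnbig⟩
    exact ⟨T, hT.1, hTeq⟩
  have hS_closed : IsClosed S := by
    have : S = Set.Ici 0 ∩ n ⁻¹' {ε} := by
      ext t; simp [hS, Set.mem_Ici]
    rw [this]
    exact isClosed_Ici.inter (isClosed_singleton.preimage hn_cont)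
  have hS_bdd : BddBelow S := ⟨0, fun t ht => ht.1⟩
  set T₀ := sInf S with hT₀def
  have hT₀mem : T₀ ∈ S := hS_closed.csInf_mem hS_ne hS_bdd
  have hT₀0 : 0 ≤ T₀ := hT₀mem.1
  set z := xm + T₀ • g with hz
  have hz_sphere : ‖z - x₀‖ = ε := hT₀mem.2
  have hle : ∀ t ∈ Set.Icc (0:ℝ) T₀, n t ≤ ε := by
    intro t ht
    by_contra h
    push_neg at h
    obtain ⟨s, hs, hseq⟩ := intermediate_value_Icc ht.1 hn_cont.continuousOn ⟨hn0, h.le⟩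
    have hsS : s ∈ S := ⟨hs.1, hseq⟩
    have h1 : T₀ ≤ s := csInf_le hS_bdd hsS
    have h2 : s ≤ t := hs.2
    have h3 : t ≤ T₀ := ht.2
    have : t = T₀ := le_antisymm h3 (h1.trans h2)
    rw [this] at h
    exact absurd hT₀mem.2 (by linarith)
  -- monotonicity along the segment
  set f : ℝ → ℝ := fun t => p (xm + t • g) with hf
  have hfd : ∀ t : ℝ, HasDerivAt f (fderiv ℝ p (xm + t • g) g) t := by
    intro t
    have hL : HasDerivAt (fun t : ℝ => xm + t • g) g t := by
      have h1 : HasDerivAt (fun t : ℝ => t • g) ((1:ℝ) • g) t :=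
        (hasDerivAt_id t).smul_const g
      rw [one_smul] at h1
      exact h1.const_add xm
    exact (hdiff _).hasFDerivAt.comp_hasDerivAt t hL
  have hpos : ∀ t ∈ Set.Icc (0:ℝ) T₀, 0 ≤ fderiv ℝ p (xm + t • g) g := by
    intro t ht
    have hy : ‖(xm + t • g) - x₀‖ ≤ ε := hle t ht
    have h1 : ‖fderiv ℝ p (xm + t • g) - fderiv ℝ p x₀‖ ≤ κ := hbound _ hy
    have h2 := (fderiv ℝ p (xm + t • g) - fderiv ℝ p x₀).le_opNorm g
    have h3 : ‖(fderiv ℝ p (xm + t • g) - fderiv ℝ p x₀) g‖ ≤ κ * ‖g‖ :=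
      h2.trans (by gcongr)
    simp only [ContinuousLinearMap.sub_apply, Real.norm_eq_abs] at h3
    rw [hinner g, hgg] at h3
    have h4 := abs_le.mp h3
    nlinarith
  have hmono : MonotoneOn f (Set.Icc 0 T₀) := by
    apply monotoneOn_of_deriv_nonneg (convex_Icc _ _)
    · exact (hpc.comp (by continuity)).continuousOn
    · exact fun t _ => (hfd t).differentiableAt.differentiableWithinAt
    · intro t ht
      rw [(hfd t).deriv]
      exact hpos t (interior_subset ht)
  have hpz : p xm ≤ p z := by
    have := hmono (Set.left_mem_Icc.mpr hT₀0) (Set.right_mem_Icc.mpr hT₀0) hT₀0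
    simpa [hf, hz] using this
  have hzK : z ∈ K := by
    simp [hK, Metric.mem_closedBall, dist_eq_norm, hz_sphere]
  -- the cap set
  set cap : Set (EuclideanSpace ℝ (Fin N)) :=
    {x | ‖x - x₀‖ = ε ∧ Real.cos θ * (ε * ‖g‖) ≤ ⟪x - x₀, g⟫_ℝ} with hcap
  have hcapK : cap ⊆ {x | ‖x - x₀‖ ≤ ε} := fun x hx => hx.1.le
  -- find m ∈ cap dominating the max
  obtain ⟨m, hm_cap, hm_ge⟩ : ∃ m ∈ cap, p z ≤ p m := by
    by_cases hzc : Real.cos θ * (ε * ‖g‖) ≤ ⟪z - x₀, g⟫_ℝ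
    · exact ⟨z, ⟨hz_sphere, hzc⟩, le_refl _⟩
    · push_neg at hzc
      set w := x₀ + (ε / ‖g‖) • g with hw
      have hw_sub : w - x₀ = (ε / ‖g‖) • g := by rw [hw]; abel
      have hw_norm : ‖w - x₀‖ = ε := by
        rw [hw_sub, norm_smul, Real.norm_eq_abs, abs_of_pos (by positivity)]
        field_simp
      have hw_inner : ⟪w - x₀, g⟫_ℝ = ε * ‖g‖ := by
        rw [hw_sub, real_inner_smul_left, hgg]
        field_simp
      have hw_cap : w ∈ cap := by
        refine ⟨hw_norm, ?_⟩
        rw [hw_inner]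
        nlinarith
      have hwK : w ∈ K := by
        simp [hK, Metric.mem_closedBall, dist_eq_norm, hw_norm]
      have t1 := taylor z hzK
      have t2 := taylor w hwK
      rw [hz_sphere] at t1
      rw [hw_norm, hw_inner] at t2
      have a1 := abs_le.mp t1
      have a2 := abs_le.mp t2
      refine ⟨w, hw_cap, ?_⟩
      have hcεG : ⟪z - x₀, g⟫_ℝ ≤ Real.cos θ * (ε * ‖g‖) := hzc.le
      have hκε : κ * ε = (1 - Real.cos θ) * ‖g‖ * ε / 2 := by rw [hκdef]; ring
      nlinarith
  have hm_max : ∀ x ∈ K, p x ≤ p m := fun x hx => (hxm hx).trans (hpz.trans hm_ge)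
  -- conclude
  have hK_img_bdd : BddAbove (p '' K) :=
    ((isCompact_closedBall x₀ ε).image hpc).bddAbove
  have hcap_img_bdd : BddAbove (p '' cap) :=
    hK_img_bdd.mono (Set.image_mono (f := p) (by rw [← hball]; exact hcapK))
  rw [hball]
  apply le_antisymm
  · apply csSup_le ((Set.nonempty_of_mem hx₀K).image p)
    rintro y ⟨x, hx, rfl⟩
    exact (hm_max x hx).trans (le_csSup hcap_img_bdd (Set.mem_image_of_mem p hm_cap))
  · apply csSup_le_csSup hK_img_bdd ((Set.nonempty_of_mem hm_cap).image p)
    apply Set.image_mono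
    rw [← hball]
    exact hcapK
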